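/- Let 0 < β < 1, T > 0, λ > 0, and t ∈ [0, T]. Then Φ(β, λ, t) := e^{-√λ(T-t)} / (2β√λ + 2e^{-√λ T}) satisfies Φ(β, λ, t) ≤ (1/2) · (β/T)^{-t/T} · (ln(T/β))^{-t/T}, provided T > β. -/

import Mathlib

theorem Phi_bound (β T lam t : ℝ) (hβ0 : 0 < β) (hβ1 : β < 1) (hT : 0 < T)
    (hlam : 0 < lam) (ht : t ∈ Set.Icc (0 : ℝ) T) (hβT : β < T) :
    Real.exp (-Real.sqrt lam * (T - t)) /
        (2 * β * Real.sqrt lam + 2 * Real.exp (-Real.sqrt lam * T)) ≤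
      (1 / 2) * (β / T) ^ (-t / T) * (Real.log (T / β)) ^ (-t / T) := by
  obtain ⟨ht0, htT⟩ := ht
  set s := Real.sqrt lam with hs_def
  have hs : 0 < s := Real.sqrt_pos.mpr hlam
  set L := Real.log (T / β) with hL_def
  have hTβ : 1 < T / β := (one_lt_div hβ0).mpr hβT
  have hL : 0 < L := Real.log_pos hTβ
  have hθeq : -t / T = -(t / T) := by ring
  rw [hθeq]
  set θ := t / T with hθ_def
  have hθ0 : 0 ≤ θ := div_nonneg ht0 hT.le
  have hθ1 : θ ≤ 1 := (div_le_one hT).mpr htT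
  set A := β * s + Real.exp (-s * T) with hA_def
  have hA : 0 < A := by positivity
  set M := (β / T) * L with hM_def
  have hM : 0 < M := by positivity
  have hMA : M ≤ A := by
    have h1 : (-(s * T) + L) + 1 ≤ Real.exp (-(s * T) + L) := Real.add_one_le_exp _
    have h2 : Real.exp (-(s * T) + L) = Real.exp (-(s * T)) * (T / β) := by
      rw [Real.exp_add, Real.exp_log (by positivity)]
    have h3 : (β / T) * (L + 1 - s * T) ≤ Real.exp (-(s * T)) := by
      rw [h2] at h1
      rw [div_mul_eq_mul_div, div_le_iff₀ hT]
      have h6 := mul_le_mul_of_nonneg_right h1 hβ0.le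
      have h7 : Real.exp (-(s * T)) * (T / β) * β = Real.exp (-(s * T)) * T := by
        field_simp
      nlinarith
    have h4 : Real.exp (-s * T) = Real.exp (-(s * T)) := by ring_nf
    have h5 : (β / T) * (s * T) = β * s := by field_simp
    nlinarith [div_pos hβ0 hT]
  have hEA : Real.exp (-s * T) ≤ A := by nlinarith [mul_pos hβ0 hs]
  have hE : Real.exp (-s * (T - t)) = Real.exp (-s * T) ^ (1 - θ) := by
    rw [← Real.exp_mul]
    congr 1
    rw [hθ_def]
    field_simp
  have h1 : Real.exp (-s * T) ^ (1 - θ) ≤ A ^ (1 - θ) :=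
    Real.rpow_le_rpow (Real.exp_nonneg _) hEA (by linarith)
  have hAsplit : A = A ^ (1 - θ) * A ^ θ := by
    rw [← Real.rpow_add hA]; simp
  have h2 : M ^ θ ≤ A ^ θ := Real.rpow_le_rpow hM.le hMA hθ0
  have hAθ : (0:ℝ) < A ^ θ := Real.rpow_pos_of_pos hA θ
  have hA1θ : (0:ℝ) < A ^ (1 - θ) := Real.rpow_pos_of_pos hA _
  have hMθ : (0:ℝ) < M ^ θ := Real.rpow_pos_of_pos hM θ
  have hRHS : (1 / 2 : ℝ) * (β / T) ^ (-θ) * L ^ (-θ) = 1 / (2 * M ^ θ) := by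
    rw [mul_assoc, ← Real.mul_rpow (by positivity) hL.le, ← hM_def,
      Real.rpow_neg hM.le]
    field_simp
  rw [hRHS]
  have hden : 2 * β * s + 2 * Real.exp (-s * T) = 2 * A := by rw [hA_def]; ring
  rw [hden, hE]
  calc Real.exp (-s * T) ^ (1 - θ) / (2 * A) ≤ A ^ (1 - θ) / (2 * A) := by gcongr
    _ = 1 / (2 * A ^ θ) := by
        rw [div_eq_div_iff (by positivity) (by positivity),
          show A ^ (1 - θ) * (2 * A ^ θ) = 2 * (A ^ (1 - θ) * A ^ θ) by ring,
          ← Real.rpow_add hA]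
        norm_num
    _ ≤ 1 / (2 * M ^ θ) := by gcongr
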